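/- Let k ≥ 1 be an integer, let X be a type, let I be a finite index set, let F : I → Finset X be a family of sets with |F_i| ≤ k for every i ∈ I, and let w : I → ℝ be nonnegative weights. Let G ⊆ I be such that the sets {F_j : j ∈ G} are pairwise disjoint, and suppose that for every i ∈ I there exists j ∈ G with F_i ∩ F_j ≠ ∅ and w(j) ≥ w(i). Then for every O ⊆ I such that the sets {F_i : i ∈ O} are pairwise disjoint, ∑_{i ∈ O} w(i) ≤ k·∑_{j ∈ G} w(j). -/

import Mathlib

/-- Greedy `1/k`-approximation for `k`-single-minded bidders: if the greedily chosen
family `G` of pairwise-disjoint sets (each of size at most `k`) blocks every bidder's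
set with a set of at least equal weight, then any pairwise-disjoint family `O`
has total weight at most `k` times that of `G`. -/
theorem greedy_k_set_packing_approx {X : Type*} [DecidableEq X] {I : Type*} [Fintype I]
    (k : ℕ) (hk : 1 ≤ k) (F : I → Finset X) (hF : ∀ i : I, (F i).card ≤ k)
    (w : I → ℝ) (hw : ∀ i : I, 0 ≤ w i)
    (G : Finset I) (hGdisj : ∀ i ∈ G, ∀ j ∈ G, i ≠ j → Disjoint (F i) (F j))
    (hblock : ∀ i : I, ∃ j ∈ G, (F i ∩ F j).Nonempty ∧ w i ≤ w j)
    (O : Finset I) (hOdisj : ∀ i ∈ O, ∀ j ∈ O, i ≠ j → Disjoint (F i) (F j)) :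
    ∑ i ∈ O, w i ≤ (k : ℝ) * ∑ j ∈ G, w j := by
  classical
  choose b hbG hbne hbw using hblock
  choose e he using fun i => hbne i
  -- e i ∈ F i ∩ F (b i)
  have key : ∑ i ∈ O, w i ≤ ∑ i ∈ O, w (b i) := Finset.sum_le_sum fun i _ => hbw i
  have maps : ∀ i ∈ O, b i ∈ G := fun i _ => hbG i
  have fib : ∑ i ∈ O, w (b i)
      = ∑ j ∈ G, ∑ i ∈ O.filter (fun i => b i = j), w (b i) :=
    (Finset.sum_fiberwise_of_maps_to maps _).symm
  have inner : ∀ j ∈ G, ∑ i ∈ O.filter (fun i => b i = j), w (b i) ≤ (k : ℝ) * w j := by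
    intro j hj
    have hsum : ∑ i ∈ O.filter (fun i => b i = j), w (b i)
        = (O.filter (fun i => b i = j)).card • w j := by
      rw [Finset.sum_congr rfl (fun i hi => ?_), Finset.sum_const]
      have := (Finset.mem_filter.mp hi).2
      rw [this]
    rw [hsum, nsmul_eq_mul]
    have hcard : (O.filter (fun i => b i = j)).card ≤ k := by
      refine le_trans (Finset.card_le_card_of_injOn e ?_ ?_) (hF j)
      · intro i hi
        obtain ⟨hiO, hbi⟩ := Finset.mem_filter.mp hi
        have := he i
        rw [Finset.mem_inter] at this
        exact hbi ▸ this.2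
      · intro i hi i' hi' hee
        by_contra hne
        obtain ⟨hiO, _⟩ := Finset.mem_filter.mp hi
        obtain ⟨hi'O, _⟩ := Finset.mem_filter.mp hi'
        have hd := hOdisj i hiO i' hi'O hne
        have h1 : e i ∈ F i := (Finset.mem_inter.mp (he i)).1
        have h2 : e i' ∈ F i' := (Finset.mem_inter.mp (he i')).1
        exact (Finset.disjoint_left.mp hd h1) (hee ▸ h2)
    exact mul_le_mul_of_nonneg_right (by exact_mod_cast hcard) (hw j)
  calc ∑ i ∈ O, w i ≤ ∑ i ∈ O, w (b i) := key
    _ = ∑ j ∈ G, ∑ i ∈ O.filter (fun i => b i = j), w (b i) := fib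
    _ ≤ ∑ j ∈ G, (k : ℝ) * w j := Finset.sum_le_sum inner
    _ = (k : ℝ) * ∑ j ∈ G, w j := (Finset.mul_sum _ _ _).symm
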